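/- arXiv:2205.15497 — 5 statements merged into one kernel-verified Lean document; each statement's English description precedes it below -/
import Mathlib

section
/- Let T : F → E be a linear map between topological vector spaces, let N = T⁻¹({0}) be its kernel, φ : F → F/N the quotient map, and T̃ : F/N → E the induced linear map with T = T̃ ∘ φ. Then the graph of T is closed in F × E if and only if the graph of T̃ is closed in (F/N) × E. -/
open Filter Topology Set

/-- For a linear map `T : F → E` between topological vector spaces with
kernel `N`, quotient map `φ : F → F/N` and induced map `T̃ : F/N → E` with `T = T̃ ∘ φ`,
the graph of `T` is closed in `F × E` iff the graph of `T̃` is closed in `(F/N) × E`. -/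
theorem valdivia_stmt2 {F E : Type*}
    [AddCommGroup F] [Module ℝ F] [TopologicalSpace F] [IsTopologicalAddGroup F]
    [ContinuousSMul ℝ F]
    [AddCommGroup E] [Module ℝ E] [TopologicalSpace E] [IsTopologicalAddGroup E]
    [ContinuousSMul ℝ E]
    (T : F →ₗ[ℝ] E) :
    IsClosed {p : F × E | T p.1 = p.2} ↔
      IsClosed {p : (F ⧸ LinearMap.ker T) × E |
        (LinearMap.ker T).liftQ T le_rfl p.1 = p.2} := by
  have hq : IsOpenQuotientMap
      (Prod.map (Submodule.Quotient.mk (p := LinearMap.ker T)) (id : E → E)) :=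
    QuotientAddGroup.isOpenQuotientMap_mk.prodMap IsOpenQuotientMap.id
  have hpre : {p : F × E | T p.1 = p.2} =
      Prod.map (Submodule.Quotient.mk (p := LinearMap.ker T)) (id : E → E) ⁻¹'
        {p : (F ⧸ LinearMap.ker T) × E |
          (LinearMap.ker T).liftQ T le_rfl p.1 = p.2} := by
    ext p
    simp [Submodule.liftQ_apply]
  rw [hpre, ← hq.isQuotientMap.isClosed_preimage]
end

section
/- In the Banach space ℓ¹ of absolutely summable real sequences, every sequence that converges to 0 in the weak topology σ(ℓ¹, ℓ^∞) converges to 0 in norm (Schur's theorem). -/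
open Filter Topology Set

/-- Schur's theorem: In `ℓ¹`, every sequence converging to `0` in the
weak topology `σ(ℓ¹, ℓ^∞)` (i.e. `∑ xₖ(n) y(n) → 0` for every bounded real sequence
`y`) converges to `0` in norm. -/
theorem valdivia_stmt4 (x : ℕ → lp (fun _ : ℕ => ℝ) 1)
    (hweak : ∀ y : ℕ → ℝ, (∃ C : ℝ, ∀ n, |y n| ≤ C) →
      Tendsto (fun k => ∑' n : ℕ, (x k : ∀ _ : ℕ, ℝ) n * y n) atTop (nhds 0)) :
    Tendsto (fun k => ‖x k‖) atTop (nhds 0) := by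
  have hp : (0:ℝ) < (1 : ENNReal).toReal := by norm_num
  have hsum : ∀ k, Summable fun n => |(x k : ∀ _ : ℕ, ℝ) n| := by
    intro k
    have h := (lp.memℓp (x k)).summable hp
    simpa [Real.norm_eq_abs] using h
  have hnorm : ∀ k, ‖x k‖ = ∑' n, |(x k : ∀ _ : ℕ, ℝ) n| := by
    intro k
    rw [lp.norm_eq_tsum_rpow hp (x k)]
    simp [Real.norm_eq_abs]
  -- coordinatewise convergence
  have hcoord : ∀ n, Tendsto (fun k => |(x k : ∀ _ : ℕ, ℝ) n|) atTop (nhds 0) := by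
    intro n
    have h := hweak (fun m => if m = n then 1 else 0)
      ⟨1, by intro m; by_cases h : m = n <;> simp [h]⟩
    have heq : ∀ k, (∑' m, (x k : ∀ _ : ℕ, ℝ) m * (if m = n then 1 else 0))
        = (x k : ∀ _ : ℕ, ℝ) n := by
      intro k
      rw [tsum_eq_single n]
      · simp
      · intro m hm; simp [hm]
    simp_rw [heq] at h
    simpa using h.abs
  rw [Metric.tendsto_atTop]
  intro ε hε
  have hε3 : 0 < ε/3 := by linarith
  -- signs
  set σ : Bool → ℝ := fun b => if b then 1 else -1 with hσ
  have hσabs : ∀ b, |σ b| = 1 := by intro b; cases b <;> simp [hσ]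
  set f : ℕ → (ℕ → Bool) → ℝ :=
    fun k y => ∑' n, (x k : ∀ _ : ℕ, ℝ) n * σ (y n) with hfdef
  have hsumf : ∀ k (y : ℕ → Bool),
      Summable fun n => (x k : ∀ _ : ℕ, ℝ) n * σ (y n) := by
    intro k y
    apply Summable.of_abs
    have : (fun n => |(x k : ∀ _ : ℕ, ℝ) n * σ (y n)|)
        = fun n => |(x k : ∀ _ : ℕ, ℝ) n| := by
      funext n; rw [abs_mul, hσabs, mul_one]
    rw [this]; exact hsum k
  have hcont : ∀ k, Continuous (f k) := by
    intro k
    refine continuous_tsum (fun n => ?_) (hsum k) (fun n y => ?_)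
    · exact (continuous_const.mul ((continuous_of_discreteTopology :
        Continuous σ).comp (continuous_apply n)))
    · rw [Real.norm_eq_abs, abs_mul, hσabs, mul_one]
  -- Baire category on the compact space of signs
  set F : ℕ → Set (ℕ → Bool) := fun m => {y | ∀ k, m ≤ k → |f k y| ≤ ε/3} with hFdef
  have hFclosed : ∀ m, IsClosed (F m) := by
    intro m
    have : F m = ⋂ k ∈ {k : ℕ | m ≤ k}, (fun y => |f k y|) ⁻¹' Iic (ε/3) := by
      ext y; simp [hFdef]
    rw [this]
    exact isClosed_biInter fun k _ => IsClosed.preimage ((hcont k).abs) isClosed_Iic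
  have hFcover : ⋃ m, F m = univ := by
    ext y
    simp only [mem_iUnion, mem_univ, iff_true]
    have h := hweak (fun n => σ (y n)) ⟨1, fun n => (hσabs _).le⟩
    obtain ⟨N, hN⟩ := Metric.tendsto_atTop.mp h (ε/3) hε3
    exact ⟨N, fun k hk => by
      have := hN k hk
      rw [Real.dist_eq, sub_zero] at this
      exact this.le⟩
  obtain ⟨m, y₀, hy₀⟩ := nonempty_interior_of_iUnion_of_closed hFclosed hFcover
  obtain ⟨I, u, hu, hI⟩ := isOpen_pi_iff.mp isOpen_interior y₀ hy₀
  have hmem : ∀ y : ℕ → Bool, (∀ i ∈ I, y i = y₀ i) → y ∈ F m := by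
    intro y hy
    refine interior_subset (hI ?_)
    intro i hi
    rw [hy i hi]
    exact (hu i hi).2
  -- key tail estimate
  have hkey : ∀ k, m ≤ k →
      ∑' n, Set.indicator ((↑I : Set ℕ)ᶜ) (fun n => |(x k : ∀ _ : ℕ, ℝ) n|) n ≤ ε/3 := by
    intro k hk
    set y : ℕ → Bool := fun n => decide (0 ≤ (x k : ∀ _ : ℕ, ℝ) n) with hy
    set y' : ℕ → Bool := fun n => if n ∈ I then y₀ n else y n with hy'
    set y'' : ℕ → Bool := fun n => if n ∈ I then y₀ n else !(y n) with hy''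
    have h1 : |f k y'| ≤ ε/3 := hmem y' (fun i hi => by simp [hy', hi]) k hk
    have h2 : |f k y''| ≤ ε/3 := hmem y'' (fun i hi => by simp [hy'', hi]) k hk
    have hdiff : f k y' - f k y'' =
        2 * ∑' n, Set.indicator ((↑I : Set ℕ)ᶜ)
          (fun n => |(x k : ∀ _ : ℕ, ℝ) n|) n := by
      show (∑' n, (x k : ∀ _ : ℕ, ℝ) n * σ (y' n))
          - (∑' n, (x k : ∀ _ : ℕ, ℝ) n * σ (y'' n)) = _
      rw [← Summable.tsum_sub (hsumf k y') (hsumf k y''), ← tsum_mul_left]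
      congr 1
      funext n
      by_cases hn : n ∈ I
      · have hind : Set.indicator ((↑I : Set ℕ)ᶜ)
            (fun n => |(x k : ∀ _ : ℕ, ℝ) n|) n = 0 := by
          apply Set.indicator_of_notMem
          simp [hn]
        rw [hind]
        simp [hy', hy'', hn]
      · have hind : Set.indicator ((↑I : Set ℕ)ᶜ)
            (fun n => |(x k : ∀ _ : ℕ, ℝ) n|) n = |(x k : ∀ _ : ℕ, ℝ) n| :=
          Set.indicator_of_mem (by simpa using hn) _
        rw [hind]
        have hy'n : y' n = y n := by simp [hy', hn]
        have hy''n : y'' n = !(y n) := by simp [hy'', hn]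
        rw [hy'n, hy''n]
        rcases le_or_gt 0 ((x k : ∀ _ : ℕ, ℝ) n) with h | h
        · have : y n = true := by simp [hy, h]
          rw [this, abs_of_nonneg h]; simp [hσ]; ring
        · have : y n = false := by simp [hy, not_le.mpr h]
          rw [this, abs_of_neg h]; simp [hσ]; ring
    have : 2 * ∑' n, Set.indicator ((↑I : Set ℕ)ᶜ)
        (fun n => |(x k : ∀ _ : ℕ, ℝ) n|) n ≤ ε/3 + ε/3 := by
      rw [← hdiff]
      have ha := le_abs_self (f k y')
      have hb := neg_abs_le (f k y'')
      linarith
    linarith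
  -- finite part tends to 0
  have hfin : Tendsto (fun k => ∑ n ∈ I, |(x k : ∀ _ : ℕ, ℝ) n|) atTop (nhds 0) := by
    have := tendsto_finset_sum I (fun n _ => hcoord n)
    simpa using this
  obtain ⟨N₁, hN₁⟩ := Metric.tendsto_atTop.mp hfin (ε/3) hε3
  refine ⟨max m N₁, fun k hk => ?_⟩
  have hkm : m ≤ k := le_trans (le_max_left _ _) hk
  have hkN : N₁ ≤ k := le_trans (le_max_right _ _) hk
  have hdecomp : ‖x k‖ = ∑ n ∈ I, |(x k : ∀ _ : ℕ, ℝ) n|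
      + ∑' n, Set.indicator ((↑I : Set ℕ)ᶜ) (fun n => |(x k : ∀ _ : ℕ, ℝ) n|) n := by
    rw [hnorm k, ← Summable.sum_add_tsum_subtype_compl (hsum k) I]
    congr 1
    rw [← tsum_subtype ((↑I : Set ℕ)ᶜ) (fun n => |(x k : ∀ _ : ℕ, ℝ) n|)]
    rfl
  have hfinbound : ∑ n ∈ I, |(x k : ∀ _ : ℕ, ℝ) n| < ε/3 := by
    have := hN₁ k hkN
    rw [Real.dist_eq, sub_zero] at this
    have h5 := le_abs_self (∑ n ∈ I, |(x k : ∀ _ : ℕ, ℝ) n|)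
    linarith
  have hnn : 0 ≤ ‖x k‖ := norm_nonneg _
  rw [Real.dist_eq, sub_zero, abs_of_nonneg hnn, hdecomp]
  have := hkey k hkm
  linarith
end

section
/- Let E be a topological vector space with a sequential web (with strand property Z_{k+1} ⊆ (1/2)•Z_k and compatibility). Then every sequence converging to 0 in E is Mackey-null: for every null sequence (y_n) in E there exists a sequence (d_n) of positive reals with d_n → ∞ such that d_n • y_n → 0 in E. -/
open Filter Topology Set Pointwise

/-- A locally convex space with a sequential web (compatible web of
balanced convex sets whose strands satisfy `W (k+1) ⊆ (1/2)•W k`, and such that every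
null sequence is eventually contained in each member of some strand) satisfies the
Mackey convergence condition: for every null sequence `(y n)` there exist positive
reals `d n → ∞` with `d n • y n → 0`. -/
theorem valdivia_stmt9 {E : Type*} [AddCommGroup E] [Module ℝ E] [TopologicalSpace E]
    [IsTopologicalAddGroup E] [ContinuousSMul ℝ E] [LocallyConvexSpace ℝ E]
    (W : (k : ℕ) → (Fin (k + 1) → ℕ) → Set E)
    (hbal : ∀ k s, Balanced ℝ (W k s))
    (hconv : ∀ k s, Convex ℝ (W k s))
    (hstrand : ∀ (α : ℕ → ℕ) (k : ℕ),
      W (k + 1) (fun i => α i.1) ⊆ ((1 : ℝ) / 2) • W k (fun i => α i.1))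
    (hcomp : ∀ V ∈ nhds (0 : E), ∀ α : ℕ → ℕ, ∃ K, W K (fun i => α i.1) ⊆ V)
    (hseq : ∀ x : ℕ → E, Tendsto x atTop (nhds (0 : E)) →
      ∃ α : ℕ → ℕ, ∀ k, ∃ N, ∀ n ≥ N, x n ∈ W k (fun i => α i.1)) :
    ∀ y : ℕ → E, Tendsto y atTop (nhds (0 : E)) →
      ∃ d : ℕ → ℝ, (∀ n, 0 < d n) ∧ Tendsto d atTop atTop ∧
        Tendsto (fun n => d n • y n) atTop (nhds (0 : E)) := by
  intro y hy
  classical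
  obtain ⟨α, hα⟩ := hseq y hy
  set Z : ℕ → Set E := fun k => W k (fun i => α i.1) with hZ
  -- monotonicity of the strand
  have hZsucc : ∀ k, Z (k + 1) ⊆ Z k := by
    intro k x hx
    obtain ⟨z, hz, rfl⟩ := hstrand α k hx
    exact (hbal k _).smul_mem (by rw [Real.norm_eq_abs, abs_of_nonneg (by norm_num : (0:ℝ) ≤ 1/2)]; norm_num) hz
  have hZanti : ∀ {j K : ℕ}, K ≤ j → Z j ⊆ Z K := by
    intro j K h
    induction j with
    | zero => simpa using (Nat.le_zero.mp h) ▸ subset_rfl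
    | succ j ih =>
      rcases Nat.lt_or_ge K (j + 1) with h' | h'
      · exact (hZsucc j).trans (ih (Nat.lt_succ_iff.mp h'))
      · have : K = j + 1 := le_antisymm h h'
        subst this; exact subset_rfl
  -- powers of two move down the strand
  have hZpow : ∀ (m j : ℕ), ∀ x ∈ Z (j + m), ((2 : ℝ) ^ m) • x ∈ Z j := by
    intro m
    induction m with
    | zero => intro j x hx; simpa using hx
    | succ m ih =>
      intro j x hx
      obtain ⟨z, hz, rfl⟩ := hstrand α (j + m) hx
      have h2 : ((2 : ℝ) ^ (m + 1)) • ((1 : ℝ) / 2) • z = ((2 : ℝ) ^ m) • z := by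
        rw [smul_smul]; ring_nf
      rw [h2]
      exact ih j z hz
  -- thresholds
  choose N hN using hα
  obtain ⟨M, hM_lt, hMN'⟩ : ∃ M : ℕ → ℕ, (∀ k, M k < M (k + 1)) ∧ ∀ k, N k ≤ M k := by
    refine ⟨fun k => Nat.rec (N 0) (fun k Mk => max (Mk + 1) (N (k + 1))) k,
      fun k => lt_of_lt_of_le (Nat.lt_succ_self _) (le_max_left _ _), fun k => ?_⟩
    cases k with
    | zero => exact le_refl _
    | succ k => exact le_max_right _ _
  have hM_mono : StrictMono M := strictMono_nat_of_lt_succ hM_lt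
  have hM_ge : ∀ k, k ≤ M k + 1 := by
    intro k
    have := hM_mono.le_apply (x := k)
    omega
  have hMN : ∀ k, N k ≤ M k := hMN'
  have hM : ∀ k, ∀ n ≥ M k, y n ∈ Z k := fun k n hn => hN k n (le_trans (hMN k) hn)
  -- the "level" function
  set c : ℕ → ℕ := fun n => Nat.findGreatest (fun k => M k ≤ n) n with hc
  have hc_ge : ∀ k n, M k ≤ n → k ≤ c n := by
    intro k n hn
    have hk : k ≤ n := le_trans hM_mono.le_apply hn
    exact Nat.le_findGreatest (P := fun k => M k ≤ n) hk hn
  have hc_mem : ∀ n, M 0 ≤ n → y n ∈ Z (c n) := by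
    intro n hn
    exact hM (c n) n (Nat.findGreatest_spec (P := fun k => M k ≤ n) (Nat.zero_le n) hn)
  have hc_tendsto : Tendsto c atTop atTop := by
    refine tendsto_atTop.2 fun k => eventually_atTop.2 ⟨M k, fun n hn => hc_ge k n hn⟩
  refine ⟨fun n => (2 : ℝ) ^ (c n / 2), fun n => by positivity, ?_, ?_⟩
  · have h1 : Tendsto (fun n => c n / 2) atTop atTop := by
      refine tendsto_atTop.2 fun b => ?_
      filter_upwards [hc_tendsto.eventually_ge_atTop (2 * b)] with n hn
      omega
    exact (tendsto_pow_atTop_atTop_of_one_lt (by norm_num : (1:ℝ) < 2)).comp h1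
  · rw [Filter.tendsto_def]
    intro V hV
    obtain ⟨K, hK⟩ := hcomp V hV α
    rw [Filter.mem_atTop_sets]
    refine ⟨max (M 0) (M (2 * K)), fun n hn => ?_⟩
    have hn0 : M 0 ≤ n := le_trans (le_max_left _ _) hn
    have hn2K : 2 * K ≤ c n := hc_ge _ n (le_trans (le_max_right _ _) hn)
    have hy' : y n ∈ Z (c n) := hc_mem n hn0
    have heq : (c n - c n / 2) + c n / 2 = c n := by omega
    have hmem : ((2 : ℝ) ^ (c n / 2)) • y n ∈ Z (c n - c n / 2) := by
      apply hZpow (c n / 2) (c n - c n / 2)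
      rw [heq]; exact hy'
    have hKle : K ≤ c n - c n / 2 := by omega
    exact hK (hZanti hKle hmem)
end

section
/- Let E be a topological vector space and (Z_k) a decreasing sequence of balanced convex sets with Z_{k+1} ⊆ (1/2)•Z_k, such that every null sequence (x_n) in E satisfies: for each k there is N_k with x_n ∈ Z_k for all n ≥ N_k. Then for every null sequence (y_n) in E there exists an increasing sequence of positive reals (d_n) with d_n → ∞ such that for every k, d_n • y_n ∈ Z_k for all sufficiently large n. -/
open Filter Topology Set Pointwise

/-- If `(Z k)` is a decreasing sequence of balanced convex sets with
`Z (k+1) ⊆ (1/2)•Z k` such that every null sequence is eventually in each `Z k`, then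
for every null sequence `(y n)` there is an increasing sequence of positive reals
`d n → ∞` such that for each `k`, `d n • y n ∈ Z k` for all sufficiently large `n`. -/
theorem valdivia_stmt16 {E : Type*} [AddCommGroup E] [Module ℝ E] [TopologicalSpace E]
    [IsTopologicalAddGroup E] [ContinuousSMul ℝ E] [LocallyConvexSpace ℝ E]
    (Z : ℕ → Set E)
    (hbal : ∀ k, Balanced ℝ (Z k)) (hconv : ∀ k, Convex ℝ (Z k))
    (hdec : ∀ k, Z (k + 1) ⊆ Z k)
    (hhalf : ∀ k, Z (k + 1) ⊆ ((1 : ℝ) / 2) • Z k)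
    (hnull : ∀ x : ℕ → E, Tendsto x atTop (nhds (0 : E)) →
      ∀ k, ∃ N, ∀ n ≥ N, x n ∈ Z k) :
    ∀ y : ℕ → E, Tendsto y atTop (nhds (0 : E)) →
      ∃ d : ℕ → ℝ, Monotone d ∧ (∀ n, 0 < d n) ∧ Tendsto d atTop atTop ∧
        ∀ k, ∃ N, ∀ n ≥ N, d n • y n ∈ Z k := by
  -- antitonicity of Z
  have hZanti : ∀ j k : ℕ, j ≤ k → Z k ⊆ Z j := by
    intro j k hjk
    induction hjk with
    | refl => exact subset_rfl
    | step h ih => exact fun x hx => (ih (hdec _ hx))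
  -- iterated halving
  have hpow : ∀ j k : ℕ, Z (k + j) ⊆ ((1 : ℝ) / 2) ^ j • Z k := by
    intro j
    induction j with
    | zero => intro k; rw [pow_zero, one_smul]; exact subset_rfl
    | succ j ih =>
      intro k
      have h1 : Z (k + (j + 1)) ⊆ ((1 : ℝ) / 2) • Z (k + j) := hhalf (k + j)
      calc Z (k + (j + 1)) ⊆ ((1 : ℝ) / 2) • Z (k + j) := h1
        _ ⊆ ((1 : ℝ) / 2) • (((1 : ℝ) / 2) ^ j • Z k) := Set.smul_set_mono (ih k)
        _ = ((1 : ℝ) / 2) ^ (j + 1) • Z k := by rw [smul_smul, ← pow_succ']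
  -- key: doubling
  have hdouble : ∀ (c : ℕ) (x : E), x ∈ Z (2 * c) → ((2 : ℝ) ^ c) • x ∈ Z c := by
    intro c x hx
    have : x ∈ ((1 : ℝ) / 2) ^ c • Z c := hpow c c (by rwa [two_mul] at hx)
    obtain ⟨z, hz, rfl⟩ := this
    have : ((2 : ℝ) ^ c) • ((1 : ℝ) / 2) ^ c • z = z := by
      rw [smul_smul, ← mul_pow]
      norm_num
    rwa [this]
  intro y hy
  have H : ∀ k, ∃ N, ∀ n ≥ N, y n ∈ Z (2 * k) := fun k => hnull y hy (2 * k)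
  choose g hg using H
  -- increasing thresholds
  set M : ℕ → ℕ := fun k => Nat.rec (g 0) (fun k ih => max (ih + 1) (g (k + 1))) k with hM
  have hMg : ∀ k, g k ≤ M k := by
    intro k; cases k with
    | zero => exact le_rfl
    | succ k => exact le_max_right _ _
  have hMsucc : ∀ k, M k + 1 ≤ M (k + 1) := fun k => le_max_left _ _
  have hMmono : Monotone M := monotone_nat_of_le_succ fun k =>
    le_trans (Nat.le_succ _) (hMsucc k)
  have hMk : ∀ k, k ≤ M k := by
    intro k
    induction k with
    | zero => exact Nat.zero_le _
    | succ k ih => exact le_trans (Nat.succ_le_succ ih) (hMsucc k)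
  -- the sequence d
  refine ⟨fun n => (2 : ℝ) ^ Nat.findGreatest (fun j => M j ≤ n) n, ?_, ?_, ?_, ?_⟩
  · intro n m hnm
    have : Nat.findGreatest (fun j => M j ≤ n) n ≤
        Nat.findGreatest (fun j => M j ≤ m) m :=
      Nat.findGreatest_mono (fun j hj => le_trans hj hnm) hnm
    exact pow_le_pow_right₀ one_le_two this
  · intro n; positivity
  · rw [tendsto_atTop]
    intro b
    obtain ⟨k, hk⟩ := pow_unbounded_of_one_lt b (one_lt_two (α := ℝ))
    refine eventually_atTop.2 ⟨M k, fun n hn => ?_⟩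
    have hkc : k ≤ Nat.findGreatest (fun j => M j ≤ n) n :=
      Nat.le_findGreatest (le_trans (hMk k) hn) hn
    exact le_trans hk.le (pow_le_pow_right₀ one_le_two hkc)
  · intro k
    refine ⟨M k, fun n hn => ?_⟩
    set c := Nat.findGreatest (fun j => M j ≤ n) n with hc
    have hkc : k ≤ c := Nat.le_findGreatest (le_trans (hMk k) hn) hn
    have hMc : M c ≤ n := Nat.findGreatest_spec (P := fun j => M j ≤ n) (m := k) (le_trans (hMk k) hn) hn
    have hyZ : y n ∈ Z (2 * c) := hg c n (le_trans (hMg c) hMc)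
    exact hZanti k c hkc (hdouble c (y n) hyZ)
end

section
/- Let E be a metrizable locally convex space. Then every precompact (totally bounded) subset of E is contained in the closed absolutely convex hull of a sequence converging to 0 in E. -/
open Filter Topology Set
open scoped Uniformity Pointwise

section ValdiviaAux

variable {E : Type*} [AddCommGroup E] [Module ℝ E] [UniformSpace E]
  [IsUniformAddGroup E] [ContinuousSMul ℝ E]

theorem vd_cov {s : Set E} (hs : TotallyBounded s) {U : Set E} (hU : U ∈ nhds (0 : E)) :
    ∃ F : Set E, F ⊆ s ∧ F.Finite ∧ ∀ a ∈ s, ∃ f ∈ F, a - f ∈ U := by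
  have hd : {p : E × E | p.1 - p.2 ∈ U} ∈ 𝓤 E := by
    rw [uniformity_eq_comap_nhds_zero_swapped]
    exact preimage_mem_comap hU
  obtain ⟨t, hts, htf, hcov⟩ := totallyBounded_iff_subset.mp hs _ hd
  refine ⟨t, hts, htf, fun a ha => ?_⟩
  obtain ⟨f, hf, hmem⟩ := mem_iUnion₂.mp (hcov ha)
  exact ⟨f, hf, hmem⟩

theorem vd_tb_step {s F V : Set E} (hs : TotallyBounded s) (hF : F.Finite) :
    TotallyBounded {x ∈ V | ∃ f ∈ F, x + f ∈ s} := by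
  refine TotallyBounded.subset (s₂ := ⋃ f ∈ F, (fun z => z - f) '' s) ?_
    ((totallyBounded_biUnion hF).mpr fun f _ =>
      hs.image (uniformContinuous_id.sub uniformContinuous_const))
  rintro x ⟨-, f, hf, hxf⟩
  exact mem_iUnion₂.mpr ⟨f, hf, ⟨x + f, hxf, add_sub_cancel_right x f⟩⟩

variable (U : ℕ → Set E) (hU : ∀ k, U k ∈ nhds (0 : E)) (A : Set E) (hA : TotallyBounded A)

noncomputable def vdChain : ℕ → {s : Set E // TotallyBounded s}
  | 0 => ⟨A, hA⟩
  | k + 1 =>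
    ⟨{x ∈ U (k + 1) | ∃ f ∈ (vd_cov (vdChain k).2 (hU (k + 1))).choose, x + f ∈ (vdChain k).1},
      vd_tb_step (vdChain k).2 (vd_cov (vdChain k).2 (hU (k + 1))).choose_spec.2.1⟩

noncomputable def vdF (k : ℕ) : Set E :=
  (vd_cov (vdChain U hU A hA k).2 (hU (k + 1))).choose

theorem vdChain_zero : (vdChain U hU A hA 0).1 = A := rfl

theorem vdChain_succ (k : ℕ) :
    (vdChain U hU A hA (k + 1)).1 =
      {x ∈ U (k + 1) | ∃ f ∈ vdF U hU A hA k, x + f ∈ (vdChain U hU A hA k).1} := by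
  rw [vdChain, vdF]

theorem vdF_subset (k : ℕ) : vdF U hU A hA k ⊆ (vdChain U hU A hA k).1 :=
  (vd_cov (vdChain U hU A hA k).2 (hU (k + 1))).choose_spec.1

theorem vdF_finite (k : ℕ) : (vdF U hU A hA k).Finite :=
  (vd_cov (vdChain U hU A hA k).2 (hU (k + 1))).choose_spec.2.1

theorem vdF_cov (k : ℕ) :
    ∀ a ∈ (vdChain U hU A hA k).1, ∃ f ∈ vdF U hU A hA k, a - f ∈ U (k + 1) :=
  (vd_cov (vdChain U hU A hA k).2 (hU (k + 1))).choose_spec.2.2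

noncomputable def vdRes (a : E) (ha : a ∈ A) :
    ∀ k : ℕ, {x : E // x ∈ (vdChain U hU A hA k).1}
  | 0 => ⟨a, ha⟩
  | k + 1 =>
    ⟨(vdRes a ha k).1 -
        (vdF_cov U hU A hA k (vdRes a ha k).1 (vdRes a ha k).2).choose, by
      have hf := (vdF_cov U hU A hA k (vdRes a ha k).1 (vdRes a ha k).2).choose_spec
      rw [vdChain_succ]
      exact ⟨hf.2, _, hf.1, by simp⟩⟩

theorem vdRes_succ (a : E) (ha : a ∈ A) (k : ℕ) :
    (vdRes U hU A hA a ha (k + 1)).1 =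
      (vdRes U hU A hA a ha k).1 -
        (vdF_cov U hU A hA k (vdRes U hU A hA a ha k).1
          (vdRes U hU A hA a ha k).2).choose := by
  rw [vdRes]

theorem vdRes_zero (a : E) (ha : a ∈ A) : (vdRes U hU A hA a ha 0).1 = a := rfl

end ValdiviaAux

set_option maxHeartbeats 1000000 in
/-- In a metrizable locally convex space, every precompact (totally
bounded) set is contained in the closed absolutely convex hull of a null sequence. -/
theorem valdivia_stmt18 {E : Type*} [AddCommGroup E] [Module ℝ E] [UniformSpace E]
    [IsUniformAddGroup E] [ContinuousSMul ℝ E] [LocallyConvexSpace ℝ E]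
    [TopologicalSpace.MetrizableSpace E]
    (A : Set E) (hA : TotallyBounded A) :
    ∃ y : ℕ → E, Tendsto y atTop (nhds (0 : E)) ∧
      A ⊆ closure (convexHull ℝ (balancedHull ℝ (Set.range y))) := by
  classical
  obtain ⟨B, hB⟩ := (nhds (0 : E)).exists_antitone_basis
  set U : ℕ → Set E := fun k => B k ∩ (((2 : ℝ) ^ (k + 1))⁻¹ • B k) with hUdef
  have h2pow : ∀ k : ℕ, ((2 : ℝ) ^ (k + 1)) ≠ 0 := fun k => by positivity
  have hUnhds : ∀ k, U k ∈ nhds (0 : E) := fun k =>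
    inter_mem (hB.mem k)
      ((set_smul_mem_nhds_zero_iff (inv_ne_zero (h2pow k))).mpr (hB.mem k))
  have hUB : ∀ k, ∀ x ∈ U k, (2 : ℝ) ^ (k + 1) • x ∈ B k := fun k x hx => by
    have := hx.2
    rwa [mem_inv_smul_set_iff₀ (h2pow k)] at this
  have hUsub : ∀ k, U k ⊆ B k := fun k => inter_subset_left
  -- the chain
  set chain : ℕ → Set E := fun k => (vdChain U hUnhds A hA k).1 with hchain
  set F : ℕ → Set E := fun k => vdF U hUnhds A hA k with hF
  have hchainU : ∀ k, chain (k + 1) ⊆ U (k + 1) := fun k => by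
    show (vdChain U hUnhds A hA (k + 1)).1 ⊆ U (k + 1)
    rw [vdChain_succ]; exact fun x hx => hx.1
  -- enriched finite sets
  set F' : ℕ → Set E := fun k => insert (0 : E) (F k) with hF'
  have hF'fin : ∀ k, (F' k).Finite := fun k => (vdF_finite U hUnhds A hA k).insert 0
  have hF'zero : ∀ k, (0 : E) ∈ F' k := fun k => mem_insert _ _
  -- list enumeration
  set L : ℕ → List E := fun k => (hF'fin k).toFinset.toList with hL
  set c : ℕ → ℕ := fun k => (L k).length with hc
  have hc1 : ∀ k, 1 ≤ c k := fun k => by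
    rw [hc]
    have : (0 : E) ∈ L k := by
      rw [hL, Finset.mem_toList, Set.Finite.mem_toFinset]; exact hF'zero k
    exact List.length_pos_iff.mpr (List.ne_nil_of_mem this)
  set e : ℕ → ℕ → E := fun k m => (L k).getD m 0 with he
  have he_mem : ∀ k m, e k m ∈ F' k := fun k m => by
    show (L k).getD m 0 ∈ F' k
    rcases lt_or_ge m (c k) with h | h
    · rw [List.getD_eq_getElem _ _ h]
      have h2 : (L k)[m] ∈ (hF'fin k).toFinset.toList := List.getElem_mem h
      exact (Set.Finite.mem_toFinset _).mp (Finset.mem_toList.mp h2)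
    · rw [List.getD_eq_default _ _ h]; exact hF'zero k
  have he_surj : ∀ k, ∀ x ∈ F' k, ∃ m < c k, e k m = x := fun k x hx => by
    have : x ∈ L k := by rw [hL, Finset.mem_toList, Set.Finite.mem_toFinset]; exact hx
    obtain ⟨m, hm, hval⟩ := List.mem_iff_getElem.mp this
    exact ⟨m, hm, by show (L k).getD m 0 = x; rw [List.getD_eq_getElem _ _ hm]; exact hval⟩
  -- cumulative sums
  set S : ℕ → ℕ := fun k => ∑ i ∈ Finset.range k, c i with hS
  have hSsucc : ∀ k, S (k + 1) = S k + c k := fun k => Finset.sum_range_succ c k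
  have hSmono : Monotone S := fun a b hab => Finset.sum_le_sum_of_subset
    (Finset.range_subset_range.mpr hab)
  have hSk : ∀ k, k ≤ S k := fun k => by
    calc k = ∑ _i ∈ Finset.range k, 1 := by simp
    _ ≤ S k := Finset.sum_le_sum fun i _ => hc1 i
  set kk : ℕ → ℕ := fun n => Nat.findGreatest (fun k => S k ≤ n) n with hkk
  have hkk1 : ∀ n, S (kk n) ≤ n := fun n =>
    Nat.findGreatest_spec (P := fun k => S k ≤ n) (Nat.zero_le n) (by simp [hS])
  have hkk2 : ∀ K n, S K ≤ n → K ≤ kk n := fun K n h =>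
    Nat.le_findGreatest (le_trans (hSk K) h) h
  have hkk3 : ∀ k m, m < c k → kk (S k + m) = k := fun k m hm => by
    refine le_antisymm ?_ (hkk2 k _ (Nat.le_add_right _ _))
    by_contra hlt
    push_neg at hlt
    have h1 : S (kk (S k + m)) ≤ S k + m := hkk1 _
    have h2 : S (k + 1) ≤ S (kk (S k + m)) := hSmono hlt
    rw [hSsucc] at h2
    omega
  -- the null sequence
  set y : ℕ → E := fun n => (2 : ℝ) ^ (kk n + 1) • e (kk n) (n - S (kk n)) with hy
  have hy_eq : ∀ k m, m < c k → y (S k + m) = (2 : ℝ) ^ (k + 1) • e k m := fun k m hm => by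
    rw [hy]; simp only [hkk3 k m hm, Nat.add_sub_cancel_left]
  have hy_range : ∀ k, ∀ x ∈ F' k, (2 : ℝ) ^ (k + 1) • x ∈ Set.range y := fun k x hx => by
    obtain ⟨m, hm, rfl⟩ := he_surj k x hx
    exact ⟨S k + m, hy_eq k m hm⟩
  refine ⟨y, ?_, ?_⟩
  · -- tendsto
    rw [hB.1.tendsto_right_iff]
    intro i _
    filter_upwards [eventually_ge_atTop (S (i + 1))] with n hn
    have hki : i + 1 ≤ kk n := hkk2 _ _ hn
    have hmem := he_mem (kk n) (n - S (kk n))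
    rw [hF', Set.mem_insert_iff] at hmem
    rcases hmem with h0 | hFmem
    · rw [hy]; simp only [h0, smul_zero]
      exact mem_of_mem_nhds (hB.mem i)
    · obtain ⟨j, hj⟩ : ∃ j, kk n = j + 1 := ⟨kk n - 1, by omega⟩
      have hxC : e (kk n) (n - S (kk n)) ∈ chain (kk n) :=
        vdF_subset U hUnhds A hA (kk n) hFmem
      have hxU : e (kk n) (n - S (kk n)) ∈ U (kk n) := by
        rw [hj] at hxC ⊢
        exact hchainU j hxC
      have : y n ∈ B (kk n) := hUB (kk n) _ hxU
      exact hB.2 (Nat.le_of_succ_le hki) this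
  · -- hull containment
    intro a ha
    set r : ℕ → E := fun k => (vdRes U hUnhds A hA a ha k).1 with hr
    set f : ℕ → E := fun k => r k - r (k + 1) with hf2
    have hfF : ∀ k, f k ∈ F k := fun k => by
      have hspec := (vdF_cov U hUnhds A hA k (vdRes U hUnhds A hA a ha k).1
        (vdRes U hUnhds A hA a ha k).2).choose_spec.1
      show r k - r (k + 1) ∈ F k
      show (vdRes U hUnhds A hA a ha k).1 - (vdRes U hUnhds A hA a ha (k + 1)).1 ∈ F k
      rw [vdRes_succ U hUnhds A hA a ha k, sub_sub_cancel]
      exact hspec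
    have hsum : ∀ n, ∑ i ∈ Finset.range n, f i = a - r n := fun n => by
      rw [hf2]
      have := Finset.sum_range_sub' r n
      simpa [hr, vdRes_zero] using this
    have hrU : ∀ k, r (k + 1) ∈ U (k + 1) := fun k =>
      hchainU k (vdRes U hUnhds A hA a ha (k + 1)).2
    -- partial sums tend to a
    have hrt : Tendsto r atTop (nhds (0 : E)) := by
      rw [hB.1.tendsto_right_iff]
      intro i _
      filter_upwards [eventually_ge_atTop (i + 1)] with n hn
      obtain ⟨j, rfl⟩ : ∃ j, n = j + 1 := ⟨n - 1, by omega⟩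
      exact hB.2 (by omega : i ≤ j + 1) (hUsub (j + 1) (hrU j))
    have htend : Tendsto (fun n => ∑ i ∈ Finset.range n, f i) atTop (nhds a) := by
      have : Tendsto (fun n => a - r n) atTop (nhds (a - 0)) :=
        tendsto_const_nhds.sub hrt
      rw [sub_zero] at this
      exact this.congr fun n => (hsum n).symm
    -- each partial sum is in the convex hull
    have hzero_mem : (0 : E) ∈ balancedHull ℝ (Set.range y) := by
      have hy0 : y 0 ∈ balancedHull ℝ (Set.range y) :=
        subset_balancedHull ℝ (Set.mem_range_self 0)
      have := (balancedHull.balanced (Set.range y)).smul_mem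
        (a := (0 : ℝ)) (by norm_num) hy0
      simpa using this
    have hz_mem : ∀ i, (2 : ℝ) ^ (i + 1) • f i ∈ balancedHull ℝ (Set.range y) := fun i =>
      subset_balancedHull ℝ (hy_range i (f i) (Set.mem_insert_of_mem _ (hfF i)))
    have hPmem : ∀ n, (∑ i ∈ Finset.range n, f i) ∈
        convexHull ℝ (balancedHull ℝ (Set.range y)) := fun n => by
      set w : ℕ → ℝ := fun i =>
        if i < n then (1 / 2 : ℝ) ^ (i + 1) else 1 - ∑ i ∈ Finset.range n, (1 / 2 : ℝ) ^ (i + 1)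
        with hw
      set p : ℕ → E := fun i => if i < n then (2 : ℝ) ^ (i + 1) • f i else 0 with hp
      have hgeo : ∑ i ∈ Finset.range n, (1 / 2 : ℝ) ^ (i + 1) ≤ 1 := by
        have h := sum_geometric_two_le n
        have : ∑ i ∈ Finset.range n, (1 / 2 : ℝ) ^ (i + 1)
            = (1 / 2) * ∑ i ∈ Finset.range n, (1 / 2 : ℝ) ^ i := by
          rw [Finset.mul_sum]
          exact Finset.sum_congr rfl fun i _ => by ring
        rw [this]; linarith
      have hw0 : ∀ i ∈ Finset.range (n + 1), 0 ≤ w i := fun i _ => by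
        simp only [hw]
        split
        · positivity
        · linarith
      have hw1 : ∑ i ∈ Finset.range (n + 1), w i = 1 := by
        rw [Finset.sum_range_succ, hw]
        simp only [lt_irrefl, if_false]
        rw [Finset.sum_congr rfl fun i hi => if_pos (Finset.mem_range.mp hi)]
        ring
      have hpm : ∀ i ∈ Finset.range (n + 1), p i ∈ balancedHull ℝ (Set.range y) := by
        intro i _
        simp only [hp]
        split
        · exact hz_mem i
        · exact hzero_mem
      have := (convex_convexHull ℝ (balancedHull ℝ (Set.range y))).sum_mem
        (t := Finset.range (n + 1)) hw0 hw1
        (fun i hi => subset_convexHull ℝ _ (hpm i hi))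
      have heq : ∑ i ∈ Finset.range (n + 1), w i • p i = ∑ i ∈ Finset.range n, f i := by
        rw [Finset.sum_range_succ, hw, hp]
        simp only [lt_irrefl, if_false, smul_zero, add_zero]
        refine Finset.sum_congr rfl fun i hi => ?_
        rw [if_pos (Finset.mem_range.mp hi), if_pos (Finset.mem_range.mp hi), smul_smul]
        rw [show ((1 / 2 : ℝ) ^ (i + 1)) * (2 : ℝ) ^ (i + 1) = 1 by
          rw [div_pow, one_pow, div_mul_eq_mul_div, one_mul, div_self (h2pow i)]]
        rw [one_smul]
      rwa [heq] at this
    exact mem_closure_of_tendsto htend (Eventually.of_forall hPmem)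
end
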